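/- arXiv:1912.04089 — 2 statements merged into one kernel-verified Lean document; each statement's English description precedes it below -/
import Mathlib

section
/- With V = Z D Zᵀ + σ² I (Z ∈ ℝ^{n×k}, D symmetric positive definite, σ² > 0), define à = σ² V⁻¹ Z D Zᵀ and B̃ = Z D Zᵀ V⁻¹ Z D Zᵀ. Then à − à B̃⁺ B̃ = 0, where B̃⁺ is the Moore–Penrose pseudoinverse of B̃. -/
open Matrix

/-- The four Penrose conditions characterizing the Moore–Penrose pseudoinverse. -/
def IsMoorePenroseInv {n : ℕ} (B Bp : Matrix (Fin n) (Fin n) ℝ) : Prop :=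
  B * Bp * B = B ∧ Bp * B * Bp = Bp ∧ (B * Bp)ᵀ = B * Bp ∧ (Bp * B)ᵀ = Bp * B

theorem stmt5 {n k : ℕ} (Z : Matrix (Fin n) (Fin k) ℝ)
    (D : Matrix (Fin k) (Fin k) ℝ) (hD : D.PosDef)
    (σ2 : ℝ) (hσ : 0 < σ2)
    (V : Matrix (Fin n) (Fin n) ℝ) (hV : V = Z * D * Zᵀ + σ2 • (1 : Matrix (Fin n) (Fin n) ℝ))
    (A B : Matrix (Fin n) (Fin n) ℝ)
    (hA : A = σ2 • (V⁻¹ * (Z * D * Zᵀ)))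
    (hB : B = Z * D * Zᵀ * V⁻¹ * (Z * D * Zᵀ))
    (Bp : Matrix (Fin n) (Fin n) ℝ) (hBp : IsMoorePenroseInv B Bp) :
    A - A * Bp * B = 0 := by
  set S : Matrix (Fin n) (Fin n) ℝ := Z * D * Zᵀ with hSdef
  -- S is symmetric (in fact PSD)
  have hSpsd : S.PosSemidef := by
    have : (Z * D * Zᵀ).PosSemidef := by
      have := hD.posSemidef.mul_mul_conjTranspose_same Z
      simpa [Matrix.mul_assoc, Matrix.conjTranspose_eq_transpose_of_trivial] using this
    simpa [hSdef] using this
  have hS : Sᵀ = S := by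
    have := hSpsd.isHermitian
    simpa [Matrix.IsHermitian, Matrix.conjTranspose_eq_transpose_of_trivial] using this
  -- V is positive definite, hence invertible
  have hVpd : V.PosDef := by
    rw [hV]
    refine Matrix.PosDef.posSemidef_add hSpsd ?_
    rw [Matrix.smul_one_eq_diagonal]
    exact Matrix.posDef_diagonal_iff.mpr fun _ => hσ
  have hVinv : V * V⁻¹ = 1 := Matrix.mul_nonsing_inv V (Matrix.isUnit_iff_isUnit_det V |>.mp hVpd.isUnit)
  -- V commutes with S
  have hcomm : V * S = S * V := by
    rw [hV]
    simp [Matrix.add_mul, Matrix.mul_add, Matrix.smul_mul, Matrix.mul_smul]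
  -- Let P := 1 - Bp * B; then B * P = 0
  have hBP : B * (1 - Bp * B) = 0 := by
    rw [Matrix.mul_sub, Matrix.mul_one, ← Matrix.mul_assoc, hBp.1, sub_self]
  -- hence S * S * (1 - Bp * B) = 0
  have hSSP : S * (S * (1 - Bp * B)) = 0 := by
    obtain ⟨P, hP⟩ : ∃ P, 1 - Bp * B = P := ⟨_, rfl⟩
    rw [hP] at hBP ⊢
    have h1 : V * (B * P) = 0 := by rw [hBP, Matrix.mul_zero]
    have h2 : V * (B * P) = S * (S * P) := by
      rw [hB]
      calc V * (S * V⁻¹ * S * P)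
          = (V * S) * (V⁻¹ * (S * P)) := by
            simp only [Matrix.mul_assoc]
        _ = (S * V) * (V⁻¹ * (S * P)) := by rw [hcomm]
        _ = S * ((V * V⁻¹) * (S * P)) := by simp only [Matrix.mul_assoc]
        _ = S * (S * P) := by rw [hVinv, Matrix.one_mul]
    rw [← h2, h1]
  -- hence S * (1 - Bp * B) = 0
  have hSP : S * (1 - Bp * B) = 0 := by
    have : (S * (1 - Bp * B))ᴴ * (S * (1 - Bp * B)) = 0 := by
      have hPsym : (1 - Bp * B)ᵀ = 1 - Bp * B := by
        rw [Matrix.transpose_sub, Matrix.transpose_one, hBp.2.2.2]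
      calc (S * (1 - Bp * B))ᴴ * (S * (1 - Bp * B))
          = (1 - Bp * B)ᴴ * (Sᴴ * (S * (1 - Bp * B))) := by
            rw [Matrix.conjTranspose_mul, Matrix.mul_assoc]
        _ = (1 - Bp * B)ᴴ * 0 := by rw [hSpsd.isHermitian.eq, hSSP]
        _ = 0 := Matrix.mul_zero _
    exact Matrix.conjTranspose_mul_self_eq_zero.mp this
  -- conclude
  have : A * (1 - Bp * B) = 0 := by
    rw [hA, Matrix.smul_mul, Matrix.mul_assoc, hSP, Matrix.mul_zero, smul_zero]
  calc A - A * Bp * B = A * (1 - Bp * B) := by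
        rw [Matrix.mul_sub, Matrix.mul_one, Matrix.mul_assoc]
    _ = 0 := this
end

section
/- Let V = Z D Zᵀ + σ² I with Z ∈ ℝ^{n×k}, D symmetric positive definite, σ² > 0, and suppose Im(X) ⊆ Im(Z) for X ∈ ℝ^{n×p}. Define A = σ² V⁻¹ (V − X H₀ Xᵀ)(I − σ² V⁻¹) and B = (I − σ² V⁻¹)(V − X H₀ Xᵀ)(I − σ² V⁻¹), where H₀ is any symmetric positive semidefinite p×p matrix with Im(X H₀ Xᵀ) ⊆ Im(X). Then A − A B⁺ B = 0. -/
open Matrix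

/-- Adjoint-like identity for the dot product and `mulVec`. -/
lemma dot_mulVec_adjoint {n k : ℕ} (Z : Matrix (Fin n) (Fin k) ℝ)
    (u : Fin n → ℝ) (w : Fin k → ℝ) : u ⬝ᵥ (Z *ᵥ w) = (Zᵀ *ᵥ u) ⬝ᵥ w := by
  rw [dotProduct_mulVec, mulVec_transpose]

/-- If `Z D Zᵀ` kills `Z c` with `D` positive definite, then `Z c = 0`. -/
lemma ZDZt_kernel {n k : ℕ} (Z : Matrix (Fin n) (Fin k) ℝ)
    {D : Matrix (Fin k) (Fin k) ℝ} (hD : D.PosDef) (c : Fin k → ℝ)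
    (h : (Z * D * Zᵀ) *ᵥ (Z *ᵥ c) = 0) : Z *ᵥ c = 0 := by
  set s : Fin k → ℝ := Zᵀ *ᵥ (Z *ᵥ c) with hs
  have hexp : (Z * D * Zᵀ) *ᵥ (Z *ᵥ c) = Z *ᵥ (D *ᵥ s) := by
    simp only [hs, mulVec_mulVec]
    congr 1
    simp [Matrix.mul_assoc]
  have hsD : s ⬝ᵥ D *ᵥ s = 0 := by
    have h0 : (Z *ᵥ c) ⬝ᵥ ((Z * D * Zᵀ) *ᵥ (Z *ᵥ c)) = 0 := by rw [h]; simp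
    rw [hexp, dot_mulVec_adjoint, ← hs] at h0
    exact h0
  have hs0 : s = 0 := by
    by_contra hne
    simpa [hsD] using (posDef_iff_dotProduct_mulVec.mp hD).2 hne
  have hzc : (Z *ᵥ c) ⬝ᵥ (Z *ᵥ c) = 0 := by
    rw [dot_mulVec_adjoint, ← hs, hs0, zero_dotProduct]
  exact dotProduct_self_eq_zero.mp hzc

theorem stmt12 {n k p : ℕ} (Z : Matrix (Fin n) (Fin k) ℝ)
    (D : Matrix (Fin k) (Fin k) ℝ) (hD : D.PosDef)
    (σ2 : ℝ) (hσ : 0 < σ2)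
    (V : Matrix (Fin n) (Fin n) ℝ) (hV : V = Z * D * Zᵀ + σ2 • (1 : Matrix (Fin n) (Fin n) ℝ))
    (X : Matrix (Fin n) (Fin p) ℝ)
    (hXZ : Set.range X.mulVec ⊆ Set.range Z.mulVec)
    (H0 : Matrix (Fin p) (Fin p) ℝ) (hH0 : H0.PosSemidef)
    (hH0Im : Set.range (X * H0 * Xᵀ).mulVec ⊆ Set.range X.mulVec)
    (A B : Matrix (Fin n) (Fin n) ℝ)
    (hA : A = σ2 • V⁻¹ * (V - X * H0 * Xᵀ) * (1 - σ2 • V⁻¹))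
    (hB : B = (1 - σ2 • V⁻¹) * (V - X * H0 * Xᵀ) * (1 - σ2 • V⁻¹))
    (Bp : Matrix (Fin n) (Fin n) ℝ) (hBp : IsMoorePenroseInv B Bp) :
    A - A * Bp * B = 0 := by
  -- V is positive definite, hence invertible
  have hZDZ : (Z * D * Zᵀ).PosSemidef := by
    have := hD.posSemidef.mul_mul_conjTranspose_same Z
    simpa using this
  have hσ1 : (σ2 • (1 : Matrix (Fin n) (Fin n) ℝ)).PosDef := by
    rw [smul_one_eq_diagonal]
    exact posDef_diagonal_iff.mpr fun _ => hσ
  have hVpd : V.PosDef := hV ▸ Matrix.PosDef.posSemidef_add hZDZ hσ1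
  have hVunit : IsUnit V.det := isUnit_iff_isUnit_det V |>.mp hVpd.isUnit
  have hVVinv : V * V⁻¹ = 1 := Matrix.mul_nonsing_inv V hVunit
  set W : Matrix (Fin n) (Fin n) ℝ := 1 - σ2 • V⁻¹ with hW
  set M : Matrix (Fin n) (Fin n) ℝ := V - X * H0 * Xᵀ with hM
  -- W = Z D Zᵀ V⁻¹
  have hWeq : W = (Z * D * Zᵀ) * V⁻¹ := by
    have h1 : (Z * D * Zᵀ) = V - σ2 • 1 := by rw [hV]; abel
    rw [hW, h1, Matrix.sub_mul, hVVinv, Matrix.smul_mul, Matrix.one_mul]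
  -- W maps everything into the range of Z
  have hWrange : ∀ x : Fin n → ℝ, W *ᵥ x ∈ Set.range Z.mulVec := by
    intro x
    refine ⟨(D * (Zᵀ * V⁻¹)) *ᵥ x, ?_⟩
    rw [mulVec_mulVec, hWeq]
    congr 1
    simp [Matrix.mul_assoc]
  -- W is injective on the range of Z
  have hWinj : ∀ u : Fin n → ℝ, u ∈ Set.range Z.mulVec → W *ᵥ u = 0 → u = 0 := by
    intro u hu h0
    obtain ⟨c, rfl⟩ := hu
    have hVW : V * W = Z * D * Zᵀ := by
      rw [hW, Matrix.mul_sub, Matrix.mul_one, Matrix.mul_smul, hVVinv, hV]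
      abel
    have h1 : (Z * D * Zᵀ) *ᵥ (Z *ᵥ c) = 0 := by
      rw [← hVW, ← mulVec_mulVec, h0, mulVec_zero]
    exact ZDZt_kernel Z hD c h1
  -- M maps range Z into range Z
  have hMrange : ∀ u : Fin n → ℝ, u ∈ Set.range Z.mulVec → M *ᵥ u ∈ Set.range Z.mulVec := by
    intro u hu
    obtain ⟨c, rfl⟩ := hu
    have h1 : V *ᵥ (Z *ᵥ c) ∈ Set.range Z.mulVec := by
      refine ⟨(D * (Zᵀ * Z)) *ᵥ c + σ2 • c, ?_⟩
      rw [hV, Matrix.add_mulVec, smul_mulVec, one_mulVec, mulVec_mulVec,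
        mulVec_add, mulVec_smul, mulVec_mulVec]
      congr 1
      simp [Matrix.mul_assoc]
    have h2 : (X * H0 * Xᵀ) *ᵥ (Z *ᵥ c) ∈ Set.range Z.mulVec :=
      hXZ (hH0Im ⟨Z *ᵥ c, rfl⟩)
    obtain ⟨a, ha⟩ := h1
    obtain ⟨b, hb⟩ := h2
    refine ⟨a - b, ?_⟩
    rw [hM, Matrix.sub_mulVec, mulVec_sub, ha, hb]
  -- kernel inclusion: B x = 0 → (M * W) x = 0
  have hker : ∀ x : Fin n → ℝ, B *ᵥ x = 0 → (M * W) *ᵥ x = 0 := by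
    intro x hx
    have hBx : W *ᵥ (M *ᵥ (W *ᵥ x)) = 0 := by
      rw [mulVec_mulVec, mulVec_mulVec, ← hB]
      exact hx
    have hMWx : M *ᵥ (W *ᵥ x) = 0 :=
      hWinj _ (hMrange _ (hWrange x)) hBx
    rw [mulVec_mulVec] at hMWx
    exact hMWx
  -- hence M * W * Bp * B = M * W
  have hMW : M * W * Bp * B = M * W := by
    have h0 : ∀ x : Fin n → ℝ, (M * W * Bp * B) *ᵥ x = (M * W) *ᵥ x := by
      intro x
      have h1 : B *ᵥ ((1 - Bp * B) *ᵥ x) = 0 := by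
        rw [mulVec_mulVec, Matrix.mul_sub, Matrix.mul_one, ← Matrix.mul_assoc, hBp.1]
        simp
      have h2 := hker _ h1
      rw [mulVec_mulVec, Matrix.mul_sub, Matrix.mul_one, Matrix.sub_mulVec,
        sub_eq_zero, ← Matrix.mul_assoc] at h2
      exact h2.symm
    ext i j
    have := congrFun (h0 (Pi.single j 1)) i
    simpa [mulVec_single] using this
  -- A = M * W - B
  have hAeq : A = M * W - B := by
    rw [hA, hB]
    have h1 : (σ2 • V⁻¹ : Matrix (Fin n) (Fin n) ℝ) = 1 - W := by
      rw [hW, sub_sub_cancel]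
    rw [h1, Matrix.sub_mul, Matrix.sub_mul, Matrix.one_mul]
  rw [hAeq, Matrix.sub_mul (M * W) B Bp, Matrix.sub_mul (M * W * Bp) (B * Bp) B, hMW, hBp.1]
  abel
end
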